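/- The exact solution map of the matrix differential equation X'(t) = -X(t) B R^{-1} B^T X(t), X(0) = X_0, is given by X(t) = (I + t X_0 B R^{-1} B^T)^{-1} X_0, whenever I + t X_0 B R^{-1} B^T is invertible; i.e., this expression satisfies the differential equation and the initial condition. -/

import Mathlib

open Matrix
attribute [local instance] Matrix.frobeniusNormedAddCommGroup Matrix.frobeniusNormedSpace

section Aux
attribute [local instance] Matrix.frobeniusNormedRing Matrix.frobeniusNormedAlgebra

lemma aux_hasDerivAt {n : ℕ} (M X₀ : Matrix (Fin n) (Fin n) ℝ) (t : ℝ)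
    (h : IsUnit (1 + t • M)) :
    HasDerivAt (fun s : ℝ => Ring.inverse (1 + s • M) * X₀)
      (-(Ring.inverse (1 + t • M) * M * (Ring.inverse (1 + t • M) * X₀))) t := by
  obtain ⟨u, hu⟩ := h
  have h1 : HasDerivAt (fun s : ℝ => 1 + s • M) M t := by
    exact (((hasDerivAt_id' t).smul_const M).const_add (1 : Matrix (Fin n) (Fin n) ℝ)).congr_deriv (one_smul _ _)
  have h2 : HasFDerivAt Ring.inverse
      (-(ContinuousLinearMap.mulLeftRight ℝ (Matrix (Fin n) (Fin n) ℝ) ↑u⁻¹) ↑u⁻¹)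
      (1 + t • M) := hu ▸ hasFDerivAt_ringInverse u
  have h3 := (h2.comp_hasDerivAt t h1).mul_const X₀
  convert h3 using 1
  · rfl
  · rfl
  · rfl
  · rfl
  simp [← hu, Ring.inverse_unit, mul_assoc]

end Aux

/-- The solution of `X' = -X B R⁻¹ Bᵀ X`, `X(0) = X₀` is
`X(t) = (I + t X₀ B R⁻¹ Bᵀ)⁻¹ X₀` wherever `I + t X₀ B R⁻¹ Bᵀ` is invertible. -/
theorem stmt0 {n m : ℕ} (X₀ : Matrix (Fin n) (Fin n) ℝ)
    (B : Matrix (Fin n) (Fin m) ℝ) (R : Matrix (Fin m) (Fin m) ℝ) (hR : IsUnit R.det)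
    (X : ℝ → Matrix (Fin n) (Fin n) ℝ)
    (hXdef : ∀ t : ℝ, X t = (1 + t • (X₀ * B * R⁻¹ * Bᵀ))⁻¹ * X₀) :
    X 0 = X₀ ∧
      ∀ t : ℝ, IsUnit (1 + t • (X₀ * B * R⁻¹ * Bᵀ)).det →
        HasDerivAt X (-(X t * (B * R⁻¹ * Bᵀ) * X t)) t := by
  set M := X₀ * B * R⁻¹ * Bᵀ with hM
  constructor
  · simp [hXdef 0]
  · intro t ht
    have hunit : IsUnit (1 + t • M) := (Matrix.isUnit_iff_isUnit_det _).mpr ht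
    have hXeq : X = fun s : ℝ => Ring.inverse (1 + s • M) * X₀ := by
      funext s
      rw [hXdef s, Matrix.nonsing_inv_eq_ringInverse]
    have h := aux_hasDerivAt M X₀ t hunit
    rw [hXeq]
    convert h using 2
    simp only [hM, Matrix.mul_assoc]
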